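/- Fix an integer M ≥ 1. The family of functions p_m : Λ_{2^M} → ℤ indexed by integers m ≥ M+1 is jointly injective: if m, m' ≥ M+1 are integers, n, n' ∈ Λ_{2^M}, and p_m(n) = p_{m'}(n'), then m = m' and n = n'. -/

import Mathlib

/-- `bdig k n` is the `k`-th binary digit of the integer `n` (floor division). -/
def bdig (k : ℕ) (n : ℤ) : ℤ := (n / 2 ^ k) % 2

/-- `pm d m n = (∑_{k=0}^{m-1} 2^{dk}(1 + ∑_{j=1}^d 2^{j-1} b_k(n_j))) - 1`. -/
def pm (d m : ℕ) (n : Fin d → ℤ) : ℤ :=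
  (∑ k ∈ Finset.range m, 2 ^ (d * k) * (1 + ∑ j : Fin d, 2 ^ (j : ℕ) * bdig k (n j))) - 1

open Finset

lemma my_ediv_ediv (a b c : ℤ) (hb : 0 < b) (hc : 0 < c) : a / b / c = a / (b * c) := by
  have hbc : 0 < b * c := mul_pos hb hc
  have h1 := Int.emod_add_mul_ediv a b
  have h2 := Int.emod_add_mul_ediv (a / b) c
  have key : (b * ((a / b) % c) + a % b) + (b * c) * (a / b / c) = a := by
    linear_combination h1 + b * h2
  have hr0 : 0 ≤ b * ((a / b) % c) + a % b :=
    add_nonneg (mul_nonneg hb.le (Int.emod_nonneg _ hc.ne')) (Int.emod_nonneg _ hb.ne')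
  have hr1 : b * ((a / b) % c) + a % b < b * c := by
    have h3 : a % b < b := Int.emod_lt_of_pos a hb
    have h4 : (a / b) % c ≤ c - 1 := by
      have := Int.emod_lt_of_pos (a / b) hc; omega
    nlinarith
  exact ((Int.ediv_emod_unique hbc).mpr ⟨by linarith [key], hr0, hr1⟩).1.symm

lemma bdig_nonneg (k : ℕ) (n : ℤ) : 0 ≤ bdig k n :=
  Int.emod_nonneg _ (by norm_num)

lemma bdig_lt (k : ℕ) (n : ℤ) : bdig k n < 2 :=
  Int.emod_lt_of_pos _ (by norm_num)

lemma bdig_eq_zero {M k : ℕ} (hk : M ≤ k) {n : ℤ} (h0 : 0 ≤ n) (h1 : n < 2 ^ M) :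
    bdig k n = 0 := by
  have h2 : n < 2 ^ k := lt_of_lt_of_le h1 (pow_le_pow_right₀ (by norm_num) hk)
  unfold bdig
  rw [Int.ediv_eq_zero_of_lt h0 h2]
  norm_num

lemma bdig_succ (k : ℕ) (n : ℤ) : bdig (k + 1) n = bdig k (n / 2) := by
  unfold bdig
  rw [pow_succ, mul_comm, ← my_ediv_ediv n 2 (2 ^ k) (by norm_num) (by positivity)]

lemma expand : ∀ (M : ℕ) (n : ℤ), 0 ≤ n → n < 2 ^ M →
    ∑ k ∈ range M, 2 ^ k * bdig k n = n := by
  intro M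
  induction M with
  | zero => intro n h0 h1; simp at h1 ⊢; omega
  | succ M ih =>
    intro n h0 h1
    rw [Finset.sum_range_succ']
    have e1 : ∀ i ∈ range M, (2:ℤ) ^ (i + 1) * bdig (i + 1) n = 2 * (2 ^ i * bdig i (n / 2)) := by
      intro i _; rw [bdig_succ]; ring
    rw [Finset.sum_congr rfl e1, ← Finset.mul_sum]
    have h2 : n / 2 < 2 ^ M := by
      rw [Int.ediv_lt_iff_lt_mul (by norm_num), ← pow_succ]
      exact h1
    rw [ih (n / 2) (Int.ediv_nonneg h0 (by norm_num)) h2]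
    simp only [pow_zero, one_mul]
    unfold bdig
    simp only [pow_zero]
    omega

lemma digits_inj (B : ℤ) (hB : 0 < B) :
    ∀ (M : ℕ) (a b : ℕ → ℤ), (∀ k, 0 ≤ a k ∧ a k < B) → (∀ k, 0 ≤ b k ∧ b k < B) →
    ∑ k ∈ range M, B ^ k * a k = ∑ k ∈ range M, B ^ k * b k →
    ∀ k < M, a k = b k := by
  intro M
  induction M with
  | zero => intro a b _ _ _ k hk; omega
  | succ M ih =>
    intro a b ha hb h k hk
    rw [Finset.sum_range_succ', Finset.sum_range_succ'] at h
    have e : ∀ (c : ℕ → ℤ), ∑ i ∈ range M, B ^ (i + 1) * c (i + 1)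
        = B * ∑ i ∈ range M, B ^ i * c (i + 1) := by
      intro c; rw [Finset.mul_sum]; exact Finset.sum_congr rfl fun i _ => by ring
    rw [e a, e b, pow_zero, one_mul, one_mul] at h
    have h0 : a 0 = b 0 := by
      have m1 : (B * (∑ i ∈ range M, B ^ i * a (i + 1)) + a 0) % B = a 0 := by
        rw [add_comm, mul_comm, Int.add_mul_emod_self_right,
          Int.emod_eq_of_lt (ha 0).1 (ha 0).2]
      have m2 : (B * (∑ i ∈ range M, B ^ i * b (i + 1)) + b 0) % B = b 0 := by
        rw [add_comm, mul_comm, Int.add_mul_emod_self_right,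
          Int.emod_eq_of_lt (hb 0).1 (hb 0).2]
      rw [← m1, ← m2, h]
    have hS : ∑ i ∈ range M, B ^ i * a (i + 1) = ∑ i ∈ range M, B ^ i * b (i + 1) :=
      mul_left_cancel₀ hB.ne' (by omega)
    cases k with
    | zero => exact h0
    | succ k' =>
      exact ih (fun i => a (i + 1)) (fun i => b (i + 1)) (fun i => ha _) (fun i => hb _)
        hS k' (by omega)

lemma geom2 (d : ℕ) : ∑ i ∈ range d, (2:ℤ) ^ i = 2 ^ d - 1 := by
  have := geom_sum_mul (2:ℤ) d
  norm_num at this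
  exact this

lemma pm_eq (d M m : ℕ) (hMm : M ≤ m) (n : Fin d → ℤ)
    (hn : ∀ j, 0 ≤ n j ∧ n j < 2 ^ M) :
    pm d m n = (∑ k ∈ range M, ((2:ℤ) ^ d) ^ k * (∑ j : Fin d, 2 ^ (j : ℕ) * bdig k (n j)))
      + (∑ k ∈ range m, ((2:ℤ) ^ d) ^ k) - 1 := by
  unfold pm
  have e1 : ∀ k ∈ range m, (2:ℤ) ^ (d * k) * (1 + ∑ j : Fin d, 2 ^ (j : ℕ) * bdig k (n j))
      = ((2:ℤ) ^ d) ^ k + ((2:ℤ) ^ d) ^ k * (∑ j : Fin d, 2 ^ (j : ℕ) * bdig k (n j)) := by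
    intro k _; rw [← pow_mul]; ring
  rw [Finset.sum_congr rfl e1, Finset.sum_add_distrib]
  have e2 : ∑ k ∈ range m, ((2:ℤ) ^ d) ^ k * (∑ j : Fin d, 2 ^ (j : ℕ) * bdig k (n j))
      = ∑ k ∈ range M, ((2:ℤ) ^ d) ^ k * (∑ j : Fin d, 2 ^ (j : ℕ) * bdig k (n j)) := by
    symm
    apply Finset.sum_subset (Finset.range_subset_range.mpr hMm)
    intro k hk hk'
    simp only [Finset.mem_range, not_lt] at hk'
    have : (∑ j : Fin d, (2:ℤ) ^ (j : ℕ) * bdig k (n j)) = 0 := by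
      apply Finset.sum_eq_zero
      intro j _
      rw [bdig_eq_zero hk' (hn j).1 (hn j).2, mul_zero]
    rw [this, mul_zero]
  rw [e2]; ring

/-- For `M ≥ 1`, the family `p_m : Λ_{2^M} → ℤ` indexed by `m ≥ M+1`
is jointly injective. -/
theorem stmt_9 (d : ℕ) (hd : 1 ≤ d) (M : ℕ) (hM : 1 ≤ M)
    (m m' : ℕ) (hm : M + 1 ≤ m) (hm' : M + 1 ≤ m')
    (n n' : Fin d → ℤ)
    (hn : ∀ j, 0 ≤ n j ∧ n j < 2 ^ M) (hn' : ∀ j, 0 ≤ n' j ∧ n' j < 2 ^ M)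
    (h : pm d m n = pm d m' n') : m = m' ∧ n = n' := by
  set B : ℤ := 2 ^ d with hBdef
  have hB2 : 2 ≤ B := by
    calc (2:ℤ) = 2 ^ 1 := by norm_num
    _ ≤ 2 ^ d := pow_le_pow_right₀ (by norm_num) hd
  have hB0 : 0 < B := by linarith
  set c : ℕ → ℤ := fun k => ∑ j : Fin d, 2 ^ (j : ℕ) * bdig k (n j) with hcdef
  set c' : ℕ → ℤ := fun k => ∑ j : Fin d, 2 ^ (j : ℕ) * bdig k (n' j) with hc'def
  have hcbound : ∀ (x : Fin d → ℤ) (k : ℕ),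
      0 ≤ (∑ j : Fin d, 2 ^ (j : ℕ) * bdig k (x j)) ∧
      (∑ j : Fin d, 2 ^ (j : ℕ) * bdig k (x j)) < B := by
    intro x k
    constructor
    · exact Finset.sum_nonneg fun j _ => mul_nonneg (by positivity) (bdig_nonneg _ _)
    · have h1 : (∑ j : Fin d, (2:ℤ) ^ (j : ℕ) * bdig k (x j)) ≤ ∑ j : Fin d, (2:ℤ) ^ (j : ℕ) := by
        apply Finset.sum_le_sum
        intro j _
        have := bdig_lt k (x j)
        have hb1 : bdig k (x j) ≤ 1 := by omega
        calc (2:ℤ) ^ (j : ℕ) * bdig k (x j) ≤ 2 ^ (j : ℕ) * 1 :=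
              mul_le_mul_of_nonneg_left hb1 (by positivity)
        _ = 2 ^ (j : ℕ) := mul_one _
      have h2 : (∑ j : Fin d, (2:ℤ) ^ (j : ℕ)) = 2 ^ d - 1 := by
        rw [Fin.sum_univ_eq_sum_range (fun j => (2:ℤ) ^ j) d, geom2]
      rw [h2] at h1
      omega
  -- rewrite h
  rw [pm_eq d M m (by omega) n hn, pm_eq d M m' (by omega) n' hn'] at h
  set A : ℤ := ∑ k ∈ range M, B ^ k * c k with hAdef
  set A' : ℤ := ∑ k ∈ range M, B ^ k * c' k with hA'def
  have heq : A + (∑ k ∈ range m, B ^ k) = A' + (∑ k ∈ range m', B ^ k) := by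
    have : A + (∑ k ∈ range m, B ^ k) - 1 = A' + (∑ k ∈ range m', B ^ k) - 1 := h
    omega
  have hAnn : ∀ (cc : ℕ → ℤ), (∀ k, 0 ≤ cc k ∧ cc k < B) →
      0 ≤ (∑ k ∈ range M, B ^ k * cc k) ∧ (∑ k ∈ range M, B ^ k * cc k) ≤ B ^ M - 1 := by
    intro cc hcc
    constructor
    · exact Finset.sum_nonneg fun k _ => mul_nonneg (by positivity) (hcc k).1
    · have h1 : (∑ k ∈ range M, B ^ k * cc k) ≤ ∑ k ∈ range M, B ^ k * (B - 1) := by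
        apply Finset.sum_le_sum
        intro k _
        exact mul_le_mul_of_nonneg_left (by have := (hcc k).2; omega) (by positivity)
      have h2 : (∑ k ∈ range M, B ^ k * (B - 1)) = B ^ M - 1 := by
        rw [← Finset.sum_mul, geom_sum_mul]
      omega
  have hAb := hAnn c (hcbound n)
  have hA'b := hAnn c' (hcbound n')
  -- key disjointness
  have key : ∀ (A1 A2 : ℤ) (m1 m2 : ℕ), M ≤ m1 → m1 < m2 → 0 ≤ A2 → A1 ≤ B ^ M - 1 →
      A1 + (∑ k ∈ range m1, B ^ k) = A2 + (∑ k ∈ range m2, B ^ k) → False := by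
    intro A1 A2 m1 m2 hM1 h12 hA2 hA1 heq'
    have hs1 : (∑ k ∈ range (m1 + 1), B ^ k) = (∑ k ∈ range m1, B ^ k) + B ^ m1 :=
      Finset.sum_range_succ _ _
    have hs2 : (∑ k ∈ range (m1 + 1), B ^ k) ≤ ∑ k ∈ range m2, B ^ k := by
      apply Finset.sum_le_sum_of_subset_of_nonneg (Finset.range_subset_range.mpr (by omega))
      intro k _ _; positivity
    have hp : B ^ M ≤ B ^ m1 := pow_le_pow_right₀ (by linarith) hM1
    omega
  have hmm : m = m' := by
    rcases lt_trichotomy m m' with hlt | heqm | hgt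
    · exact absurd heq (fun hh => key A A' m m' (by omega) hlt hA'b.1 hAb.2 hh)
    · exact heqm
    · exact absurd heq.symm (fun hh => key A' A m' m (by omega) hgt hAb.1 hA'b.2 hh)
  subst hmm
  have hAA : A = A' := by omega
  have hc : ∀ k < M, c k = c' k :=
    digits_inj B hB0 M c c' (hcbound n) (hcbound n') hAA
  have hdig : ∀ k, k < M → ∀ j : Fin d, bdig k (n j) = bdig k (n' j) := by
    intro k hk j
    set a : ℕ → ℤ := fun i => if h : i < d then bdig k (n ⟨i, h⟩) else 0 with hadef
    set a' : ℕ → ℤ := fun i => if h : i < d then bdig k (n' ⟨i, h⟩) else 0 with ha'def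
    have hab : ∀ i, 0 ≤ a i ∧ a i < 2 := by
      intro i; simp only [hadef]
      split
      · exact ⟨bdig_nonneg _ _, bdig_lt _ _⟩
      · norm_num
    have ha'b : ∀ i, 0 ≤ a' i ∧ a' i < 2 := by
      intro i; simp only [ha'def]
      split
      · exact ⟨bdig_nonneg _ _, bdig_lt _ _⟩
      · norm_num
    have hsum : ∑ i ∈ range d, 2 ^ i * a i = ∑ i ∈ range d, 2 ^ i * a' i := by
      rw [← Fin.sum_univ_eq_sum_range (fun i => (2:ℤ) ^ i * a i) d,
        ← Fin.sum_univ_eq_sum_range (fun i => (2:ℤ) ^ i * a' i) d]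
      have e1 : (∑ i : Fin d, (2:ℤ) ^ (i : ℕ) * a i) = c k :=
        Finset.sum_congr rfl fun i _ => by simp [hadef, i.isLt]
      have e2 : (∑ i : Fin d, (2:ℤ) ^ (i : ℕ) * a' i) = c' k :=
        Finset.sum_congr rfl fun i _ => by simp [ha'def, i.isLt]
      rw [e1, e2, hc k hk]
    have := digits_inj 2 (by norm_num) d a a' hab ha'b hsum j j.isLt
    simpa [hadef, ha'def, j.isLt] using this
  refine ⟨rfl, funext fun j => ?_⟩
  rw [← expand M (n j) (hn j).1 (hn j).2, ← expand M (n' j) (hn' j).1 (hn' j).2]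
  exact Finset.sum_congr rfl fun k hk => by
    rw [hdig k (Finset.mem_range.mp hk) j]
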